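/- Let R be the orbit equivalence relation of an action of a countable group Γ on (X, μ) by μ-preserving bimeasurable bijections (so [x] = Γ·x for all x), let π be an orthogonal representation of R on the trivial Hilbert bundle with fiber H, and let b be a 1-cocycle for π. Suppose F ⊆ X is measurable and ξ : F → H is measurable with the property that for μ-a.e. x ∈ F, b(x, y) = ξ(x) − π(x, y)ξ(y) for every y ∈ [x] ∩ F. Let F̃ = ⋃_{g ∈ Γ} g(F) be the R-saturation of F. Then there exists a measurable map ξ̃ : F̃ → H such that ξ̃ = ξ μ-a.e. on F and, for μ-a.e. x ∈ F̃, b(x, y) = ξ̃(x) − π(x, y)ξ̃(y) for every y ∈ [x]. -/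

import Mathlib

open MeasureTheory Filter


private lemma norm_meas_of_inner_meas {X : Type*} [MeasurableSpace X]
    {H : Type*} [NormedAddCommGroup H] [InnerProductSpace ℝ H]
    [TopologicalSpace.SeparableSpace H]
    {f : X → H} (h : ∀ w : H, Measurable fun x => (inner ℝ (f x) w : ℝ)) (v : H) :
    Measurable fun x => ‖f x - v‖ := by
  have : Nonempty H := ⟨0⟩
  set w : ℕ → H := TopologicalSpace.denseSeq H with hwdef
  have hdw : DenseRange w := TopologicalSpace.denseRange_denseSeq H
  apply measurable_of_Iic
  intro q
  by_cases hq : 0 ≤ q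
  · have hset : (fun x => ‖f x - v‖) ⁻¹' Set.Iic q =
        ⋂ n, {x | (inner ℝ (f x) (w n) : ℝ) - inner ℝ v (w n) ≤ q * ‖w n‖} := by
      ext x
      simp only [Set.mem_preimage, Set.mem_Iic, Set.mem_iInter, Set.mem_setOf_eq]
      constructor
      · intro hx n
        have h1 : (inner ℝ (f x - v) (w n) : ℝ) ≤ ‖f x - v‖ * ‖w n‖ := real_inner_le_norm _ _
        rw [inner_sub_left] at h1
        calc (inner ℝ (f x) (w n) : ℝ) - inner ℝ v (w n) ≤ ‖f x - v‖ * ‖w n‖ := h1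
          _ ≤ q * ‖w n‖ := mul_le_mul_of_nonneg_right hx (norm_nonneg _)
      · intro hx
        set u := f x - v with hu
        have hsub : Set.range w ⊆ {z : H | (inner ℝ u z : ℝ) ≤ q * ‖z‖} := by
          rw [Set.range_subset_iff]
          intro n
          have := hx n
          rw [Set.mem_setOf_eq, hu, inner_sub_left]
          exact this
        have hcl : IsClosed {z : H | (inner ℝ u z : ℝ) ≤ q * ‖z‖} :=
          isClosed_le (continuous_const.inner continuous_id) (continuous_const.mul continuous_norm)
        have hall : ∀ z : H, (inner ℝ u z : ℝ) ≤ q * ‖z‖ := fun z =>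
          hcl.closure_subset_iff.2 hsub (hdw z)
        have huu := hall u
        rw [real_inner_self_eq_norm_mul_norm] at huu
        rcases eq_or_lt_of_le (norm_nonneg u) with h0 | h0
        · rw [← h0]; exact hq
        · exact le_of_mul_le_mul_right huu h0
    rw [hset]
    exact MeasurableSet.iInter fun n =>
      measurableSet_le ((h (w n)).sub measurable_const) measurable_const
  · have hset : (fun x => ‖f x - v‖) ⁻¹' Set.Iic q = ∅ := by
      ext x
      simp only [Set.mem_preimage, Set.mem_Iic, Set.mem_empty_iff_false, iff_false, not_le]
      exact lt_of_lt_of_le (lt_of_not_ge hq) (norm_nonneg _)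
    rw [hset]; exact MeasurableSet.empty

private lemma measurable_isometry_apply {X : Type*} [MeasurableSpace X]
    {H : Type*} [NormedAddCommGroup H] [InnerProductSpace ℝ H]
    [TopologicalSpace.SeparableSpace H] [MeasurableSpace H] [BorelSpace H]
    {f : X → H} (hdist : ∀ v : H, Measurable fun x => ‖f x - v‖)
    {T : X → H → H} (hT : ∀ x, Isometry (T x)) (hTm : ∀ v, Measurable fun x => T x v) :
    Measurable fun x => T x (f x) := by
  have : Nonempty H := ⟨0⟩
  set w : ℕ → H := TopologicalSpace.denseSeq H with hwdef
  have hdw : DenseRange w := TopologicalSpace.denseRange_denseSeq H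
  have key : ∀ k : ℕ, ∀ x, ∃ m, ‖f x - w m‖ < 1 / (k + 1) := by
    intro k x
    obtain ⟨m, hm⟩ := hdw.exists_dist_lt (f x) (by positivity : (0:ℝ) < 1 / (k + 1))
    exact ⟨m, by rwa [dist_eq_norm] at hm⟩
  classical
  have hg : ∀ k : ℕ, Measurable fun x => T x (w (Nat.find (key k x))) := fun k =>
    Measurable.find (fun m => hTm (w m))
      (fun m => measurableSet_lt (hdist (w m)) measurable_const) (key k)
  apply measurable_of_tendsto_metrizable hg
  rw [tendsto_pi_nhds]
  intro x
  rw [tendsto_iff_dist_tendsto_zero]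
  apply squeeze_zero (fun k => dist_nonneg) (fun k => ?_) tendsto_one_div_add_atTop_nhds_zero_nat
  have := (Nat.find_spec (key k x))
  calc dist (T x (w (Nat.find (key k x)))) (T x (f x))
      = dist (w (Nat.find (key k x))) (f x) := (hT x).dist_eq _ _
    _ ≤ 1 / (k + 1) := by rw [dist_eq_norm, norm_sub_rev]; exact le_of_lt this

private lemma measurable_of_inner_meas {X : Type*} [MeasurableSpace X]
    {H : Type*} [NormedAddCommGroup H] [InnerProductSpace ℝ H]
    [TopologicalSpace.SeparableSpace H] [MeasurableSpace H] [BorelSpace H]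
    {f : X → H} (h : ∀ w : H, Measurable fun x => (inner ℝ (f x) w : ℝ)) :
    Measurable f := by
  have := measurable_isometry_apply (norm_meas_of_inner_meas h)
    (T := fun _ => (id : H → H)) (fun _ => isometry_id) (fun _ => measurable_const)
  simpa using this

/-- Let `R` be the orbit equivalence relation of a μ-preserving action of a countable group
`Γ` on `(X, μ)` by bimeasurable bijections, `π` an orthogonal representation of `R` on the
trivial Hilbert bundle with fiber `H`, and `b` a 1-cocycle for `π`.  If `ξ : F → H` is a
measurable map on a measurable set `F ⊆ X` with `b(x, y) = ξ(x) − π(x, y)ξ(y)` for a.e.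
`x ∈ F` and all `y ∈ [x] ∩ F`, then `ξ` extends to a measurable map `ξ̃` on the R-saturation
`F̃ = ⋃_{g ∈ Γ} g(F)` with `b(x, y) = ξ̃(x) − π(x, y)ξ̃(y)` for a.e. `x ∈ F̃` and all
`y ∈ [x]`. -/
theorem coboundary_extension_to_saturation
    {X : Type*} [MeasurableSpace X] [StandardBorelSpace X]
    (μ : Measure X) [IsProbabilityMeasure μ]
    -- a countable group Γ acts on (X, μ) by μ-preserving bimeasurable bijections
    {Γ : Type*} [Group Γ] [Countable Γ]
    (a : Γ → X ≃ X)
    (hameas : ∀ g : Γ, Measurable (a g) ∧ Measurable (a g).symm)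
    (haone : ∀ x, a 1 x = x)
    (hamul : ∀ g h : Γ, ∀ x, a (g * h) x = a g (a h x))
    (hamp : ∀ g : Γ, MeasurePreserving (a g) μ μ)
    -- R is the orbit equivalence relation of the action
    (R : X → X → Prop)
    (hR : ∀ x y, R x y ↔ ∃ g : Γ, y = a g x)
    -- H is a separable real Hilbert space
    {H : Type*} [NormedAddCommGroup H] [InnerProductSpace ℝ H] [CompleteSpace H]
    [TopologicalSpace.SeparableSpace H] [MeasurableSpace H] [BorelSpace H]
    -- π is an orthogonal representation of R on the trivial bundle with fiber H
    (π : X → X → (H ≃ₗᵢ[ℝ] H))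
    (hπmeas : ∀ v w : H, Measurable fun p : {p : X × X // R p.1 p.2} =>
      (inner ℝ (π p.1.1 p.1.2 v) w : ℝ))
    (hπmul : ∀ᵐ x ∂μ, ∀ y z, R x y → R y z → ∀ v, π x y (π y z v) = π x z v)
    -- b is a 1-cocycle for π
    (b : X → X → H)
    (hbmeas : Measurable fun p : {p : X × X // R p.1 p.2} => b p.1.1 p.1.2)
    (hbcocycle : ∀ᵐ x ∂μ, ∀ y z, R x y → R y z → b x z = b x y + π x y (b y z))
    -- F is measurable and ξ : F → H is a measurable map trivializing b on R restricted to F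
    (F : Set X) (hF : MeasurableSet F)
    (ξ : X → H) (hξmeas : Measurable fun x : F => ξ x)
    (hξ : ∀ᵐ x ∂μ, x ∈ F → ∀ y, R x y → y ∈ F → b x y = ξ x - π x y (ξ y)) :
    ∃ ξ' : X → H,
      (Measurable fun x : (⋃ g : Γ, (a g) '' F) => ξ' x) ∧
      (∀ᵐ x ∂μ, x ∈ F → ξ' x = ξ x) ∧
      (∀ᵐ x ∂μ, x ∈ (⋃ g : Γ, (a g) '' F) →
        ∀ y, R x y → b x y = ξ' x - π x y (ξ' y)) := by
  classical
  -- basic action facts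
  have hainv : ∀ (g : Γ) x, a g⁻¹ (a g x) = x := fun g x => by
    rw [← hamul, inv_mul_cancel, haone]
  have hainv' : ∀ (g : Γ) x, a g (a g⁻¹ x) = x := fun g x => by
    rw [← hamul, mul_inv_cancel, haone]
  -- R facts
  have hRg : ∀ (g : Γ) x, R x (a g x) := fun g x => (hR x _).2 ⟨g, rfl⟩
  have hRrefl : ∀ x, R x x := fun x => (hR x x).2 ⟨1, (haone x).symm⟩
  have hRsymm : ∀ {x y}, R x y → R y x := by
    intro x y h
    obtain ⟨g, rfl⟩ := (hR x y).1 h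
    exact (hR _ _).2 ⟨g⁻¹, (hainv g x).symm⟩
  have hRtrans : ∀ {x y z}, R x y → R y z → R x z := by
    intro x y z h1 h2
    obtain ⟨g, rfl⟩ := (hR x y).1 h1
    obtain ⟨h, rfl⟩ := (hR _ _).1 h2
    exact (hR _ _).2 ⟨h * g, (hamul h g x).symm⟩
  -- the saturation
  set Ft : Set X := ⋃ g : Γ, (a g) '' F with hFt
  have hFtmeas : MeasurableSet Ft :=
    MeasurableSet.iUnion fun g => by
      rw [Equiv.image_eq_preimage_symm]
      exact (hameas g).2 hF
  have hmem : ∀ x, x ∈ Ft ↔ ∃ g : Γ, a g x ∈ F := by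
    intro x
    simp only [hFt, Set.mem_iUnion, Set.mem_image]
    constructor
    · rintro ⟨g, y, hy, rfl⟩
      exact ⟨g⁻¹, by rwa [hainv]⟩
    · rintro ⟨g, hg⟩
      exact ⟨g⁻¹, a g x, hg, hainv g x⟩
  -- surjection from ℕ onto Γ
  have : Nonempty Γ := ⟨1⟩
  obtain ⟨e, he⟩ := exists_surjective_nat Γ
  -- the selection predicate
  set P : ℕ → X → Prop := fun n x => a (e n) x ∈ F ∨ x ∉ Ft with hP
  have htot : ∀ x, ∃ n, P n x := by
    intro x
    by_cases hx : x ∈ Ft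
    · obtain ⟨g, hg⟩ := (hmem x).1 hx
      obtain ⟨n, rfl⟩ := he g
      exact ⟨n, Or.inl hg⟩
    · exact ⟨0, Or.inr hx⟩
  have hPmeas : ∀ n, MeasurableSet {x | P n x} := fun n =>
    ((hameas (e n)).1 hF).union hFtmeas.compl
  -- extend ξ by zero outside F, measurably
  set ξF : X → H := Function.extend (Subtype.val : F → X) (fun x : F => ξ x) (fun _ => 0)
    with hξF
  have hξFeq : ∀ x (hx : x ∈ F), ξF x = ξ x := fun x hx =>
    Subtype.val_injective.extend_apply _ _ (⟨x, hx⟩ : F)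
  have hξFmeas : Measurable ξF :=
    (MeasurableEmbedding.subtype_coe hF).measurable_extend hξmeas measurable_const
  -- the pieces of the extension
  set Φ : ℕ → X → H := fun n x =>
    b x (a (e n) x) + π x (a (e n) x) (ξF (a (e n) x)) with hΦ
  have hΦmeas : ∀ n, Measurable (Φ n) := by
    intro n
    have hag : Measurable (a (e n)) := (hameas (e n)).1
    have mpair : Measurable fun x =>
        (⟨(x, a (e n) x), (hR _ _).2 ⟨e n, rfl⟩⟩ : {p : X × X // R p.1 p.2}) :=
      Measurable.subtype_mk (measurable_id.prodMk hag)
    have hb1 : Measurable fun x => b x (a (e n) x) := hbmeas.comp mpair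
    have hπv : ∀ v : H, Measurable fun x => π x (a (e n) x) v := by
      intro v
      apply measurable_of_inner_meas
      intro w
      exact (hπmeas v w).comp mpair
    have hπterm : Measurable fun x => π x (a (e n) x) (ξF (a (e n) x)) := by
      have hf : Measurable fun x => ξF (a (e n) x) := hξFmeas.comp hag
      exact measurable_isometry_apply
        (fun v => (hf.sub measurable_const).norm)
        (T := fun x => (π x (a (e n) x) : H → H))
        (fun x => (π x (a (e n) x)).isometry) hπv
    exact hb1.add hπterm
  -- the extension
  set ξ' : X → H := fun x => Φ (Nat.find (htot x)) x with hξ'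
  have hξ'meas : Measurable ξ' := Measurable.find hΦmeas hPmeas htot
  -- the null set
  have hae := (hπmul.and hbcocycle).and hξ
  rw [Filter.eventually_iff, mem_ae_iff] at hae
  obtain ⟨T, hTsub, hTmeas, hTnull⟩ := exists_measurable_superset_of_null hae
  set N : Set X := ⋃ g : Γ, (a g) ⁻¹' T with hN
  have hNnull : μ N = 0 := by
    apply measure_iUnion_null
    intro g
    rw [(hamp g).measure_preimage hTmeas.nullMeasurableSet]
    exact hTnull
  have hQ : ∀ x ∉ N, ∀ y, R x y →
      ((∀ u z, R y u → R u z → ∀ v, π y u (π u z v) = π y z v) ∧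
       (∀ u z, R y u → R u z → b y z = b y u + π y u (b u z)) ∧
       (y ∈ F → ∀ u, R y u → u ∈ F → b y u = ξ y - π y u (ξ u))) := by
    intro x hx y hy
    obtain ⟨g, rfl⟩ := (hR x y).1 hy
    have hnT : a g x ∉ T := fun hmemT => hx (Set.mem_iUnion.2 ⟨g, hmemT⟩)
    by_contra hc
    apply hnT
    apply hTsub
    simp only [Set.mem_compl_iff, Set.mem_setOf_eq]
    tauto
  -- saturation is R-invariant, and nonmembership in N is R-invariant
  have hFtinv : ∀ {x y}, x ∈ Ft → R x y → y ∈ Ft := by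
    intro x y hx hxy
    obtain ⟨g, rfl⟩ := (hR x y).1 hxy
    obtain ⟨h, hh⟩ := (hmem x).1 hx
    refine (hmem _).2 ⟨h * g⁻¹, ?_⟩
    rw [hamul, hainv]
    exact hh
  -- key: value of ξ' at points of the saturation
  have hξ'spec : ∀ x ∈ Ft, ∃ u ∈ F, R x u ∧ ξ' x = b x u + π x u (ξ u) := by
    intro x hx
    have hfind := Nat.find_spec (htot x)
    rcases hfind with hf | hf
    · refine ⟨a (e (Nat.find (htot x))) x, hf, hRg _ _, ?_⟩
      simp only [hξ', hΦ]
      rw [hξFeq _ hf]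
    · exact absurd hx hf
  -- pointwise computation at good points
  have hmain : ∀ x ∉ N, x ∈ Ft → ∀ y, R x y → b x y = ξ' x - π x y (ξ' y) := by
    intro x hxN hx y hxy
    have hyFt : y ∈ Ft := hFtinv hx hxy
    obtain ⟨u, huF, hxu, hux⟩ := hξ'spec x hx
    obtain ⟨w, hwF, hyw, hwy⟩ := hξ'spec y hyFt
    obtain ⟨hπx, hbx, -⟩ := hQ x hxN x (hRrefl x)
    obtain ⟨-, -, hξu⟩ := hQ x hxN u hxu
    have hRuw : R u w := hRtrans (hRtrans (hRsymm hxu) hxy) hyw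
    have hRxw : R x w := hRtrans hxu hRuw
    -- the cocycle relations at x
    have e1 : b x w = b x y + π x y (b y w) := hbx y w hxy hyw
    have e2 : b x w = b x u + π x u (b u w) := hbx u w hxu hRuw
    -- trivialization at u
    have e3 : b u w = ξ u - π u w (ξ w) := hξu huF w hRuw hwF
    -- multiplicativity
    have e4 : ∀ v, π x y (π y w v) = π x w v := hπx y w hxy hyw
    have e5 : ∀ v, π x u (π u w v) = π x w v := hπx u w hxu hRuw
    rw [hux, hwy]
    rw [map_add (π x y), e4 (ξ w)]
    have e6 : π x y (b y w) = b x w - b x y := by rw [e1]; abel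
    rw [e6, e2, e3, map_sub (π x u), e5 (ξ w)]
    abel
  -- value of ξ' on F at good points
  have hmainF : ∀ x ∉ N, x ∈ F → ξ' x = ξ x := by
    intro x hxN hxF
    have hxFt : x ∈ Ft := (hmem x).2 ⟨1, by rwa [haone]⟩
    obtain ⟨u, huF, hxu, hux⟩ := hξ'spec x hxFt
    obtain ⟨-, -, hξx⟩ := hQ x hxN x (hRrefl x)
    have := hξx hxF u hxu huF
    rw [hux, this]
    abel
  -- conclude
  refine ⟨ξ', hξ'meas.comp measurable_subtype_coe, ?_, ?_⟩
  · have : ∀ᵐ x ∂μ, x ∉ N := by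
      rw [ae_iff]
      simpa using hNnull
    filter_upwards [this] with x hx hxF
    exact hmainF x hx hxF
  · have : ∀ᵐ x ∂μ, x ∉ N := by
      rw [ae_iff]
      simpa using hNnull
    filter_upwards [this] with x hx hxFt y hxy
    exact hmain x hx hxFt y hxy
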